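/- Let (M,g) be a complete Riemannian manifold of dimension d ≥ 3 whose Green kernel satisfies G(x,y) ≤ c·d(x,y)^{2−d}. Let o ∈ M, ρ(x) = d(o,x), and suppose f ≥ 0 is locally bounded with ∫_{B(o,R)} f ≤ c R^{d−3} for all R ≥ 1 and f(y) ≤ c/(ρ(y)·σ(y)²) for a function σ ≥ 1. Then the integral F₃(x) = ∫_{M \ B(o,2ρ(x))} d(x,y)^{2−d} f(y) dy satisfies F₃(x) ≤ C'/ρ(x) for all x with ρ(x) ≥ 10, for some constant C' depending only on c and d. (Dyadic decomposition estimate.) -/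
import Mathlib


open Metric MeasureTheory

/-- Dyadic decomposition estimate: on a metric measure space, if `f ≥ 0` satisfies
`∫_{B(o,R)} f ≤ c R^{d−3}` for `R ≥ 1` and `f(y) ≤ c/(ρ(y)σ(y)²)` with `σ ≥ 1`,
then `F₃(x) = ∫_{M∖B(o,2ρ(x))} d(x,y)^{2−d} f(y) dy ≤ C'/ρ(x)` whenever `ρ(x) ≥ 10`,
with `C'` depending only on `c` and `d`. -/
theorem stmt_12 (d : ℕ) (hd : 3 ≤ d) (c : ℝ) (hc : 0 < c) :
    ∃ C' : ℝ, 0 < C' ∧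
      ∀ (M : Type) [MetricSpace M] [MeasurableSpace M] [BorelSpace M] (μ : Measure M)
        (G : M → M → ℝ) (o : M) (σ f : M → ℝ),
        -- Green kernel estimate (Li–Yau):
        (∀ x y : M, G x y ≤ c * dist x y ^ (2 - (d : ℝ))) →
        (∀ y, 1 ≤ σ y) → (∀ y, 0 ≤ f y) →
        (∀ R : ℝ, 1 ≤ R →
          ∫⁻ y in ball o R, ENNReal.ofReal (f y) ∂μ
            ≤ ENNReal.ofReal (c * R ^ ((d : ℝ) - 3))) →
        (∀ y, f y ≤ c / (dist o y * σ y ^ 2)) →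
        ∀ x : M, 10 ≤ dist o x →
          ∫⁻ y in (ball o (2 * dist o x))ᶜ,
              ENNReal.ofReal (dist x y ^ (2 - (d : ℝ)) * f y) ∂μ
            ≤ ENNReal.ofReal (C' / dist o x) := by
  refine ⟨c * 2 ^ (2 * d), by positivity, ?_⟩
  intro M _ _ _ μ G o σ f hG hσ hf hF hfb x hx
  set ρ : ℝ := dist o x with hρ_def
  have hρ0 : (0:ℝ) < ρ := lt_of_lt_of_le (by norm_num) hx
  -- the annuli
  set S : ℕ → Set M := fun k => ball o (2 ^ (k+1) * (2 * ρ)) \ ball o (2 ^ k * (2 * ρ))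
    with hS_def
  -- covering
  have hcover : (ball o (2 * ρ))ᶜ ⊆ ⋃ k : ℕ, S k := by
    intro y hy
    have hy' : 2 * ρ ≤ dist y o := by
      simpa [Metric.mem_ball, not_lt] using hy
    have h2ρ : (0:ℝ) < 2 * ρ := by linarith
    have h1 : (1:ℝ) ≤ dist y o / (2 * ρ) := (one_le_div h2ρ).2 hy'
    obtain ⟨k, hk1, hk2⟩ := exists_nat_pow_near h1 (one_lt_two (α := ℝ))
    refine Set.mem_iUnion.2 ⟨k, ?_, ?_⟩
    · have := (div_lt_iff₀ h2ρ).1 hk2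
      simpa [Metric.mem_ball] using this
    · intro hmem
      have := (Metric.mem_ball.1 hmem)
      have := (le_div_iff₀ h2ρ).1 hk1
      linarith
  -- per-annulus bound
  have hSmeas : ∀ k, MeasurableSet (S k) := fun k =>
    (measurableSet_ball).diff measurableSet_ball
  have key : ∀ k : ℕ,
      ∫⁻ y in S k, ENNReal.ofReal (dist x y ^ (2 - (d : ℝ)) * f y) ∂μ
        ≤ ENNReal.ofReal ((2 ^ k * ρ) ^ (2 - (d:ℝ))) *
            ENNReal.ofReal (c * (2 ^ (k+2) * ρ) ^ ((d:ℝ) - 3)) := by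
    intro k
    have h2k : (1:ℝ) ≤ 2 ^ k := one_le_pow₀ (by norm_num)
    have hB0 : (0:ℝ) < 2 ^ k * ρ := by positivity
    have step1 : ∫⁻ y in S k, ENNReal.ofReal (dist x y ^ (2 - (d : ℝ)) * f y) ∂μ
        ≤ ∫⁻ y in S k, ENNReal.ofReal ((2 ^ k * ρ) ^ (2 - (d:ℝ))) *
            ENNReal.ofReal (f y) ∂μ := by
      refine lintegral_mono_ae ?_
      filter_upwards [ae_restrict_mem (hSmeas k)] with y hy
      have hyd : 2 ^ k * (2 * ρ) ≤ dist y o := by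
        have := hy.2
        simpa [Metric.mem_ball, not_lt] using this
      have htri : dist y o ≤ dist y x + dist x o := dist_triangle y x o
      have hxy : 2 ^ k * ρ ≤ dist x y := by
        have h1 : dist x y = dist y x := dist_comm x y
        have h2 : dist x o = ρ := by rw [hρ_def, dist_comm]
        nlinarith [htri, hyd]
      have hpow : dist x y ^ (2 - (d:ℝ)) ≤ (2 ^ k * ρ) ^ (2 - (d:ℝ)) := by
        apply Real.rpow_le_rpow_of_nonpos hB0 hxy
        have : (3:ℝ) ≤ (d:ℝ) := by exact_mod_cast hd
        linarith
      rw [← ENNReal.ofReal_mul (by positivity)]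
      exact ENNReal.ofReal_le_ofReal (mul_le_mul_of_nonneg_right hpow (hf y))
    have step2 : ∫⁻ y in S k, ENNReal.ofReal ((2 ^ k * ρ) ^ (2 - (d:ℝ))) *
            ENNReal.ofReal (f y) ∂μ
        = ENNReal.ofReal ((2 ^ k * ρ) ^ (2 - (d:ℝ))) *
            ∫⁻ y in S k, ENNReal.ofReal (f y) ∂μ :=
      lintegral_const_mul' _ _ ENNReal.ofReal_ne_top
    have hsub : S k ⊆ ball o (2 ^ (k+2) * ρ) := by
      intro y hy
      have : y ∈ ball o (2 ^ (k+1) * (2 * ρ)) := hy.1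
      have he : (2:ℝ) ^ (k+1) * (2 * ρ) = 2 ^ (k+2) * ρ := by ring
      rwa [he] at this
    have step3 : ∫⁻ y in S k, ENNReal.ofReal (f y) ∂μ
        ≤ ENNReal.ofReal (c * (2 ^ (k+2) * ρ) ^ ((d:ℝ) - 3)) := by
      refine le_trans (lintegral_mono_set hsub) (hF _ ?_)
      have : (1:ℝ) ≤ 2 ^ (k+2) := one_le_pow₀ (by norm_num)
      nlinarith
    calc _ ≤ _ := step1
      _ = _ := step2
      _ ≤ _ := mul_le_mul_right step3 _
  -- term computation
  have hterm : ∀ k : ℕ,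
      ENNReal.ofReal ((2 ^ k * ρ) ^ (2 - (d:ℝ))) *
          ENNReal.ofReal (c * (2 ^ (k+2) * ρ) ^ ((d:ℝ) - 3))
        = ENNReal.ofReal (c * 2 ^ (2*(d:ℝ) - 6) / ρ) * ENNReal.ofReal (2⁻¹) ^ k := by
    intro k
    rw [← ENNReal.ofReal_pow (by norm_num), ← ENNReal.ofReal_mul (by positivity),
      ← ENNReal.ofReal_mul (by positivity)]
    congr 1
    have h2 : (0:ℝ) < 2 := two_pos
    have e1 : (2:ℝ) ^ k * ρ = (2:ℝ) ^ (k:ℝ) * ρ := by rw [Real.rpow_natCast]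
    have e2 : (2:ℝ) ^ (k+2) * ρ = (2:ℝ) ^ ((k:ℝ)+2) * ρ := by
      rw [show ((k:ℝ)+2) = ((k+2 : ℕ):ℝ) by push_cast; ring, Real.rpow_natCast]
    rw [e1, e2,
      Real.mul_rpow (by positivity) hρ0.le,
      Real.mul_rpow (by positivity) hρ0.le,
      ← Real.rpow_mul h2.le, ← Real.rpow_mul h2.le]
    have einv : ((2:ℝ)⁻¹) ^ k = (2:ℝ) ^ (-(k:ℝ)) := by
      rw [Real.rpow_neg h2.le, Real.rpow_natCast, inv_pow]
    rw [einv]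
    rw [show ((2:ℝ)^((k:ℝ)*(2-(d:ℝ))) * ρ^(2-(d:ℝ))) * (c * ((2:ℝ)^(((k:ℝ)+2)*((d:ℝ)-3)) * ρ^((d:ℝ)-3)))
        = c * ((2:ℝ)^((k:ℝ)*(2-(d:ℝ))) * (2:ℝ)^(((k:ℝ)+2)*((d:ℝ)-3)))
            * (ρ^(2-(d:ℝ)) * ρ^((d:ℝ)-3)) by ring]
    rw [← Real.rpow_add h2, ← Real.rpow_add hρ0]
    rw [show (k:ℝ)*(2-(d:ℝ)) + ((k:ℝ)+2)*((d:ℝ)-3) = (2*(d:ℝ) - 6) + (-(k:ℝ)) by ring]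
    rw [show (2 - (d:ℝ)) + ((d:ℝ) - 3) = -1 by ring]
    rw [Real.rpow_neg_one, Real.rpow_add h2]
    ring
  -- summation
  have hmain : ∫⁻ y in (ball o (2 * ρ))ᶜ,
      ENNReal.ofReal (dist x y ^ (2 - (d : ℝ)) * f y) ∂μ
      ≤ ENNReal.ofReal (c * 2 ^ (2*(d:ℝ) - 6) / ρ) * 2 := by
    calc ∫⁻ y in (ball o (2 * ρ))ᶜ, ENNReal.ofReal (dist x y ^ (2 - (d : ℝ)) * f y) ∂μ
        ≤ ∫⁻ y in ⋃ k : ℕ, S k, ENNReal.ofReal (dist x y ^ (2 - (d : ℝ)) * f y) ∂μ :=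
          lintegral_mono_set hcover
      _ ≤ ∑' k : ℕ, ∫⁻ y in S k, ENNReal.ofReal (dist x y ^ (2 - (d : ℝ)) * f y) ∂μ :=
          lintegral_iUnion_le _ _
      _ ≤ ∑' k : ℕ, ENNReal.ofReal (c * 2 ^ (2*(d:ℝ) - 6) / ρ) * ENNReal.ofReal (2⁻¹) ^ k := by
          refine ENNReal.tsum_le_tsum fun k => ?_
          rw [← hterm k]; exact key k
      _ = ENNReal.ofReal (c * 2 ^ (2*(d:ℝ) - 6) / ρ) * ∑' k : ℕ, ENNReal.ofReal (2⁻¹) ^ k :=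
          ENNReal.tsum_mul_left
      _ ≤ ENNReal.ofReal (c * 2 ^ (2*(d:ℝ) - 6) / ρ) * 2 := by
          refine mul_le_mul_right ?_ _
          rw [ENNReal.tsum_geometric]
          have : ENNReal.ofReal (2⁻¹) = 2⁻¹ := by
            rw [ENNReal.ofReal_inv_of_pos two_pos, ENNReal.ofReal_ofNat]
          rw [this]
          norm_num
  refine hmain.trans ?_
  have h2 : (2:ENNReal) = ENNReal.ofReal 2 := by norm_num
  rw [h2, ← ENNReal.ofReal_mul (by positivity)]
  apply ENNReal.ofReal_le_ofReal
  have hexp : (2:ℝ) * 2 ^ (2*(d:ℝ) - 6) ≤ 2 ^ (2*d) := by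
    have h1 : (2:ℝ) * 2 ^ (2*(d:ℝ)-6) = 2 ^ (2*(d:ℝ)-5) := by
      rw [show (2*(d:ℝ)-5) = 1 + (2*(d:ℝ)-6) by ring, Real.rpow_add two_pos, Real.rpow_one]
    rw [h1, show ((2:ℝ)^(2*d) : ℝ) = (2:ℝ) ^ ((2*d : ℕ):ℝ) from (Real.rpow_natCast _ _).symm]
    apply Real.rpow_le_rpow_of_exponent_le one_le_two
    have : (3:ℝ) ≤ (d:ℝ) := by exact_mod_cast hd
    push_cast
    linarith
  have e1 : c * 2 ^ (2*(d:ℝ)-6) / ρ * 2 = (2 * 2 ^ (2*(d:ℝ)-6)) * c / ρ := by ring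
  have e2 : c * 2^(2*d) / ρ = ((2:ℝ)^(2*d)) * c / ρ := by ring
  rw [e1, e2]
  gcongr
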